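/- For ω > 0 and -2√ω < c < 2√ω, ∫_ℝ ϕ_{ω,c}(x)⁶ dx = 32(c² + 2ω)·arctan(√((2√ω+c)/(2√ω-c))) + 24c√(4ω-c²). -/

import Mathlib

open Real Filter MeasureTheory Set Topology

lemma deriv_alg (b s ch sh e d : ℝ) (hs : 0 < s) (hd : 0 < d) (he : 0 < e)
    (h1 : s ^ 2 = 1 - b ^ 2) (h2 : ch ^ 2 - sh ^ 2 = 1) (h3 : e = ch + sh)
    (h4 : d = ch - b) (hB : 0 < 1 - b ^ 2) :
    (1 + 2 * b ^ 2) / ((1 - b ^ 2) ^ 2 * s) * (1 / (1 + ((e - b) / s) ^ 2) * (e / s))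
      + 3 * b / (2 * (1 - b ^ 2) ^ 2) * ((ch * d - sh * sh) / d ^ 2)
      + 1 / (2 * (1 - b ^ 2)) * ((ch * d ^ 2 - sh * (2 * d ^ 1 * sh)) / (d ^ 2) ^ 2)
    = (d ^ 3)⁻¹ := by
  have key2 : 1 + ((e - b) / s) ^ 2 = 2 * e * d / s ^ 2 := by
    subst h3 h4
    field_simp
    linear_combination h1 - h2
  have t1 : (1 + 2 * b ^ 2) / ((1 - b ^ 2) ^ 2 * s) * (1 / (1 + ((e - b) / s) ^ 2) * (e / s))
      = (1 + 2 * b ^ 2) / (2 * (1 - b ^ 2) ^ 2 * d) := by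
    rw [key2]
    field_simp
  rw [t1, show ch * d - sh * sh = ch * d - ch ^ 2 + 1 by linear_combination h2,
    show ch * d ^ 2 - sh * (2 * d ^ 1 * sh) = ch * d ^ 2 - 2 * d * (ch ^ 2 - 1) by
      linear_combination (2 : ℝ) * d * h2]
  subst h4
  field_simp
  ring

lemma key (b : ℝ) (hb1 : -1 < b) (hb2 : b < 1) :
    ∫ u in Set.Ioi (0:ℝ), ((Real.cosh u - b) ^ 3)⁻¹
      = (1 + 2 * b ^ 2) / ((1 - b ^ 2) ^ 2 * Real.sqrt (1 - b ^ 2))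
          * Real.arctan (Real.sqrt (1 - b ^ 2) / (1 - b))
        + 3 * b / (2 * (1 - b ^ 2) ^ 2) := by
  have hb2' : (0:ℝ) < 1 - b := by linarith
  have hbsq : (0:ℝ) < 1 - b ^ 2 := by nlinarith
  set s : ℝ := Real.sqrt (1 - b ^ 2) with hs_def
  have hs : 0 < s := Real.sqrt_pos.mpr hbsq
  have hs2 : s ^ 2 = 1 - b ^ 2 := Real.sq_sqrt hbsq.le
  set P : ℝ := (1 + 2 * b ^ 2) / ((1 - b ^ 2) ^ 2 * s) with hP_def
  set Q : ℝ := 3 * b / (2 * (1 - b ^ 2) ^ 2) with hQ_def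
  set R : ℝ := 1 / (2 * (1 - b ^ 2)) with hR_def
  have hd : ∀ u : ℝ, 0 < Real.cosh u - b := fun u => by nlinarith [Real.one_le_cosh u]
  set G : ℝ → ℝ := fun u => P * Real.arctan ((Real.exp u - b) / s)
      + Q * (Real.sinh u / (Real.cosh u - b))
      + R * (Real.sinh u / (Real.cosh u - b) ^ 2) with hG_def
  have hderiv : ∀ u : ℝ, HasDerivAt G (((Real.cosh u - b) ^ 3)⁻¹) u := by
    intro u
    have h1 : HasDerivAt (fun u : ℝ => Real.arctan ((Real.exp u - b) / s))
        ((1 / (1 + ((Real.exp u - b) / s) ^ 2)) * (Real.exp u / s)) u := by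
      simpa using (((Real.hasDerivAt_exp u).sub_const b).div_const s).arctan
    have h2 : HasDerivAt (fun u : ℝ => Real.sinh u / (Real.cosh u - b))
        ((Real.cosh u * (Real.cosh u - b) - Real.sinh u * Real.sinh u)
          / (Real.cosh u - b) ^ 2) u :=
      (Real.hasDerivAt_sinh u).div ((Real.hasDerivAt_cosh u).sub_const b) (hd u).ne'
    have h3 : HasDerivAt (fun u : ℝ => Real.sinh u / (Real.cosh u - b) ^ 2)
        ((Real.cosh u * ((Real.cosh u - b) ^ 2)
            - Real.sinh u * (2 * (Real.cosh u - b) ^ 1 * Real.sinh u))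
          / ((Real.cosh u - b) ^ 2) ^ 2) u :=
      (Real.hasDerivAt_sinh u).div
        (((Real.hasDerivAt_cosh u).sub_const b).pow 2) (pow_ne_zero 2 (hd u).ne')
    have hsum := ((h1.const_mul P).add (h2.const_mul Q)).add (h3.const_mul R)
    have heq : P * ((1 / (1 + ((Real.exp u - b) / s) ^ 2)) * (Real.exp u / s))
        + Q * ((Real.cosh u * (Real.cosh u - b) - Real.sinh u * Real.sinh u)
            / (Real.cosh u - b) ^ 2)
        + R * ((Real.cosh u * ((Real.cosh u - b) ^ 2)
            - Real.sinh u * (2 * (Real.cosh u - b) ^ 1 * Real.sinh u))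
          / ((Real.cosh u - b) ^ 2) ^ 2)
        = ((Real.cosh u - b) ^ 3)⁻¹ := by
      rw [hP_def, hQ_def, hR_def]
      exact deriv_alg b s (Real.cosh u) (Real.sinh u) (Real.exp u) (Real.cosh u - b)
        hs (hd u) (Real.exp_pos u) hs2 (Real.cosh_sq_sub_sinh_sq u)
        (Real.cosh_add_sinh u).symm rfl hbsq
    exact heq ▸ hsum
  -- limit at infinity
  have hlim : Tendsto G atTop (𝓝 (P * (π / 2) + Q * 1 + R * 0)) := by
    have l1 : Tendsto (fun u : ℝ => Real.arctan ((Real.exp u - b) / s)) atTop (𝓝 (π / 2)) := by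
      have h1 : Tendsto (fun u : ℝ => (Real.exp u - b) / s) atTop atTop :=
        (Real.tendsto_exp_atTop.atTop_add tendsto_const_nhds).atTop_div_const hs
      exact (Real.tendsto_arctan_atTop.mono_right nhdsWithin_le_nhds).comp h1
    have hexpneg : Tendsto (fun u : ℝ => Real.exp (-u)) atTop (𝓝 0) :=
      Real.tendsto_exp_neg_atTop_nhds_zero
    have l2 : Tendsto (fun u : ℝ => Real.sinh u / (Real.cosh u - b)) atTop (𝓝 1) := by
      have h2 : Tendsto (fun u : ℝ =>
          (1 - Real.exp (-u) ^ 2) / (1 + Real.exp (-u) ^ 2 - 2 * b * Real.exp (-u)))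
          atTop (𝓝 1) := by
        have hnum : Tendsto (fun u : ℝ => 1 - Real.exp (-u) ^ 2) atTop (𝓝 1) := by
          simpa using (tendsto_const_nhds (x := (1:ℝ))).sub (hexpneg.pow 2)
        have hden : Tendsto (fun u : ℝ => 1 + Real.exp (-u) ^ 2 - 2 * b * Real.exp (-u))
            atTop (𝓝 1) := by
          simpa using ((tendsto_const_nhds (x := (1:ℝ))).add (hexpneg.pow 2)).sub
            (hexpneg.const_mul (2 * b))
        simpa only [div_one, Pi.div_def] using hnum.div hden one_ne_zero
      refine h2.congr (fun u => ?_)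
      have he : Real.exp (-u) * Real.exp u = 1 := by
        rw [← Real.exp_add]; simp
      rw [Real.sinh_eq, Real.cosh_eq]
      have hdu := hd u
      rw [Real.cosh_eq] at hdu
      have hden1 : 0 < 1 + Real.exp (-u) ^ 2 - 2 * b * Real.exp (-u) := by
        nlinarith [sq_nonneg (Real.exp (-u) - b), hbsq]
      have hden2 : (0:ℝ) < (Real.exp u + Real.exp (-u)) / 2 - b := hdu
      rw [div_eq_div_iff hden1.ne' hden2.ne']
      linear_combination (b - Real.exp (-u)) * he
    have l3 : Tendsto (fun u : ℝ => Real.sinh u / (Real.cosh u - b) ^ 2) atTop (𝓝 0) := by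
      have hinv : Tendsto (fun u : ℝ => (Real.cosh u - b)⁻¹) atTop (𝓝 0) := by
        apply Tendsto.inv_tendsto_atTop
        apply tendsto_atTop_mono (fun u => ?_)
          (tendsto_atTop_add_const_right _ (-b)
            (Real.tendsto_exp_atTop.atTop_div_const (by norm_num : (0:ℝ) < 2)))
        have : Real.exp u / 2 ≤ Real.cosh u := by
          rw [Real.cosh_eq]
          have := (Real.exp_pos (-u)).le
          linarith
        linarith
      have := l2.mul hinv
      simp only [mul_zero] at this
      refine this.congr (fun u => ?_)
      rw [sq, ← div_div, div_eq_mul_inv, div_eq_mul_inv]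
    have := ((l1.const_mul P).add (l2.const_mul Q)).add (l3.const_mul R)
    exact this
  have hint := integral_Ioi_of_hasDerivAt_of_nonneg' (a := 0)
    (fun x _ => hderiv x) (fun x _ => by have := hd x; positivity) hlim
  rw [hint]
  have hG0 : G 0 = P * Real.arctan ((1 - b) / s) := by
    simp [hG_def, Real.exp_zero, Real.sinh_zero]
  rw [hG0]
  have harc : Real.arctan ((1 - b) / s) = π / 2 - Real.arctan (s / (1 - b)) := by
    rw [show (1 - b) / s = (s / (1 - b))⁻¹ by rw [inv_div]]
    exact Real.arctan_inv_of_pos (by positivity)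
  rw [harc]
  ring

/-- The real soliton profile `ϕ_{ω,c}` of the derivative NLS. -/
noncomputable def varphi (ω c x : ℝ) : ℝ :=
  (Real.sqrt ω / (4 * ω - c ^ 2)
      * (Real.cosh (x * Real.sqrt (4 * ω - c ^ 2)) - c / (2 * Real.sqrt ω)))
    ^ (-(1 / 2 : ℝ))

/-- `∫ ϕ⁶ = 32(c²+2ω)·arctan(√((2√ω+c)/(2√ω-c))) + 24c√(4ω-c²)`. -/
theorem stmt11 (ω c : ℝ) (hω : 0 < ω)
    (hc1 : -2 * Real.sqrt ω < c) (hc2 : c < 2 * Real.sqrt ω) :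
    (∫ x, (varphi ω c x) ^ 6)
      = 32 * (c ^ 2 + 2 * ω)
          * Real.arctan (Real.sqrt ((2 * Real.sqrt ω + c) / (2 * Real.sqrt ω - c)))
        + 24 * c * Real.sqrt (4 * ω - c ^ 2) := by
  set w : ℝ := Real.sqrt ω with hw_def
  have hw : 0 < w := Real.sqrt_pos.mpr hω
  have hw2 : w ^ 2 = ω := Real.sq_sqrt hω.le
  have hc4 : c ^ 2 < 4 * ω := by nlinarith
  have h4pos : (0:ℝ) < 4 * ω - c ^ 2 := by linarith
  set a : ℝ := Real.sqrt (4 * ω - c ^ 2) with ha_def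
  have ha : 0 < a := Real.sqrt_pos.mpr h4pos
  have ha2 : a ^ 2 = 4 * ω - c ^ 2 := Real.sq_sqrt h4pos.le
  set b : ℝ := c / (2 * w) with hb_def
  have hb1 : -1 < b := by
    rw [hb_def, lt_div_iff₀ (by positivity)]
    linarith
  have hb2 : b < 1 := by
    rw [hb_def, div_lt_iff₀ (by positivity)]
    linarith
  have hbsq : (0:ℝ) < 1 - b ^ 2 := by nlinarith
  set K : ℝ := (4 * ω - c ^ 2) / w with hK_def
  have hK : 0 < K := by positivity
  have hd : ∀ u : ℝ, 0 < Real.cosh u - b := fun u => by nlinarith [Real.one_le_cosh u]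
  -- pointwise identity
  have hpoint : ∀ x : ℝ, varphi ω c x ^ 6 = K ^ 3 * ((Real.cosh (x * a) - b) ^ 3)⁻¹ := by
    intro x
    have hS : 0 < w / (4 * ω - c ^ 2) * (Real.cosh (x * a) - b) := by
      have := hd (x * a)
      positivity
    rw [varphi]
    rw [← Real.rpow_natCast (_ ^ (-(1/2 : ℝ))) 6, ← Real.rpow_mul hS.le]
    norm_num
    rw [mul_pow, mul_inv, ← inv_pow, inv_div, hK_def]
  rw [show (∫ x, varphi ω c x ^ 6)
      = ∫ x, K ^ 3 * ((Real.cosh (x * a) - b) ^ 3)⁻¹ from by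
    congr 1; funext x; exact hpoint x]
  -- evenness
  have heven : ∀ x : ℝ, K ^ 3 * ((Real.cosh (|x| * a) - b) ^ 3)⁻¹
      = K ^ 3 * ((Real.cosh (x * a) - b) ^ 3)⁻¹ := by
    intro x
    rw [show |x| * a = |x * a| by rw [abs_mul, abs_of_pos ha], Real.cosh_abs]
  rw [show (∫ x, K ^ 3 * ((Real.cosh (x * a) - b) ^ 3)⁻¹)
      = ∫ x, K ^ 3 * ((Real.cosh (|x| * a) - b) ^ 3)⁻¹ from by
    congr 1; funext x; exact (heven x).symm]
  rw [integral_comp_abs (f := fun x => K ^ 3 * ((Real.cosh (x * a) - b) ^ 3)⁻¹)]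
  rw [MeasureTheory.integral_const_mul]
  rw [show (∫ x in Set.Ioi (0:ℝ), ((Real.cosh (x * a) - b) ^ 3)⁻¹)
      = ∫ x in Set.Ioi (0:ℝ), (fun y => ((Real.cosh y - b) ^ 3)⁻¹) (a * x) from by
    congr 1; funext x; rw [mul_comm]]
  rw [MeasureTheory.integral_comp_mul_left_Ioi (fun y => ((Real.cosh y - b) ^ 3)⁻¹) 0 ha,
    mul_zero, smul_eq_mul]
  rw [key b hb1 hb2]
  -- now pure algebra
  have h1b : (0:ℝ) < 1 - b := by linarith
  have h2wc : (0:ℝ) < 2 * w - c := by linarith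
  have hb2a : 1 - b ^ 2 = a ^ 2 / (2 * w) ^ 2 := by
    rw [hb_def, ha2, ← hw2]
    field_simp
    ring
  have hsab : Real.sqrt (1 - b ^ 2) = a / (2 * w) := by
    rw [show 1 - b ^ 2 = (a / (2 * w)) ^ 2 from by rw [hb2a, div_pow]]
    exact Real.sqrt_sq (by positivity)
  have harg : Real.sqrt ((2 * w + c) / (2 * w - c)) = Real.sqrt (1 - b ^ 2) / (1 - b) := by
    have step : (2 * w + c) / (2 * w - c) = (1 - b ^ 2) / (1 - b) ^ 2 := by
      rw [div_eq_div_iff h2wc.ne' (by positivity), hb_def]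
      field_simp
      ring
    rw [step, Real.sqrt_div hbsq.le, Real.sqrt_sq h1b.le]
  have hKa : K = a ^ 2 / w := by rw [hK_def, ← ha2]
  rw [harg, hsab, hKa, hb2a, hb_def, ← hw2]
  have hane := ha.ne'
  have hwne := hw.ne'
  have h1bne : (1 : ℝ) - c / (2 * w) ≠ 0 := by
    rw [hb_def] at h1b; exact h1b.ne'
  field_simp
  ring
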